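/- Let R be a commutative noetherian ring with unity, let a be an ideal of R, and let M be an R-module. If Tor^R_i(R/a, M) is a finitely generated R-module for every i ≥ 0, then Tor^R_i(N, M) is a finitely generated R-module for every finitely generated R-module N with Supp_R(N) ⊆ V(a) and every i ≥ 0. -/

import Mathlib

open CategoryTheory CategoryTheory.Limits

universe u
noncomputable section
variable {R : Type u} [CommRing R]

/-- transfer finiteness along iso -/
lemma fg_of_iso {X Y : ModuleCat.{u} R} (e : X ≅ Y) (h : Module.Finite R X) : Module.Finite R Y :=
  Module.Finite.equiv e.toLinearEquiv

lemma fg_of_exact [IsNoetherianRing R] (S : ShortComplex (ModuleCat.{u} R)) (hS : S.Exact)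
    (h1 : Module.Finite R S.X₁) (h3 : Module.Finite R S.X₃) : Module.Finite R S.X₂ := by
  have hker : LinearMap.range S.f.hom = LinearMap.ker S.g.hom := hS.moduleCat_range_eq_ker
  rw [Module.finite_def]
  apply Submodule.fg_of_fg_map_of_fg_inf_ker S.g.hom
  · have : IsNoetherian R S.X₃ := inferInstance
    exact IsNoetherian.noetherian _
  · rw [top_inf_eq, ← hker, LinearMap.range_eq_map]
    exact (Module.finite_def.mp h1).map _

lemma fg_of_subsingleton (X : ModuleCat.{u} R) (h : Subsingleton X) : Module.Finite R X :=
  Module.Finite.of_surjective (0 : (Fin 0 → R) →ₗ[R] X) (fun x => ⟨0, Subsingleton.elim _ _⟩)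

noncomputable section
variable {R : Type u} [CommRing R] {M : Type u} [AddCommGroup M] [Module R M]
  (P : ProjectiveResolution (ModuleCat.of R M))

/-- tensored complex -/
def tc (X : ModuleCat.{u} R) : HomologicalComplex (ModuleCat.{u} R) (ComplexShape.down ℕ) :=
  (((MonoidalCategory.tensoringLeft (ModuleCat.{u} R)).obj X).mapHomologicalComplex _).obj P.complex

def tcMap {X Y : ModuleCat.{u} R} (f : X ⟶ Y) : tc P X ⟶ tc P Y :=
  (NatTrans.mapHomologicalComplex ((MonoidalCategory.tensoringLeft (ModuleCat.{u} R)).map f) _).app P.complex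

def torIso (X : ModuleCat.{u} R) (i : ℕ) :
    ((Tor (ModuleCat.{u} R) i).obj X).obj (ModuleCat.of R M) ≅ (tc P X).homology i :=
  P.isoLeftDerivedObj ((MonoidalCategory.tensoringLeft (ModuleCat.{u} R)).obj X) i

def tcIso {X Y : ModuleCat.{u} R} (e : X ≅ Y) : tc P X ≅ tc P Y :=
  (NatIso.mapHomologicalComplex ((MonoidalCategory.tensoringLeft (ModuleCat.{u} R)).mapIso e) _).app P.complex

end

noncomputable section
open MonoidalCategory
variable {R : Type u} [CommRing R] {M : Type u} [AddCommGroup M] [Module R M]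
  (P : ProjectiveResolution (ModuleCat.of R M))

instance tc_flat (n : ℕ) : Module.Flat R (P.complex.X n) := by
  have hproj : Projective (P.complex.X n) := P.projective n
  have : Module.Projective R (P.complex.X n) := by
    rw [IsProjective.iff_projective]
    simpa using hproj
  infer_instance

lemma tcMap_f {X Y : ModuleCat.{u} R} (f : X ⟶ Y) (n : ℕ) :
    (tcMap P f).f n = ModuleCat.ofHom (f.hom.rTensor (P.complex.X n)) := rfl

lemma tcSES (S : ShortComplex (ModuleCat.{u} R)) (hS : S.ShortExact) :
    (ShortComplex.mk (tcMap P S.f) (tcMap P S.g)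
      (by
        have h0 : S.g.hom ∘ₗ S.f.hom = 0 := congrArg ModuleCat.Hom.hom S.zero
        apply HomologicalComplex.hom_ext
        intro n
        rw [HomologicalComplex.comp_f, tcMap_f, tcMap_f]
        show ModuleCat.ofHom (LinearMap.rTensor _ S.f.hom) ≫ ModuleCat.ofHom (LinearMap.rTensor _ S.g.hom) = _
        rw [← ModuleCat.ofHom_comp, ← LinearMap.rTensor_comp, h0, LinearMap.rTensor_zero]
        rfl)).ShortExact := by
  apply HomologicalComplex.shortExact_of_degreewise_shortExact
  intro n
  have hinj : Function.Injective (S.f.hom.rTensor (P.complex.X n)) :=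
    Module.Flat.rTensor_preserves_injective_linearMap S.f.hom
      ((ModuleCat.mono_iff_injective S.f).mp hS.mono_f)
  have hsurj : Function.Surjective (S.g.hom.rTensor (P.complex.X n)) :=
    LinearMap.rTensor_surjective _ ((ModuleCat.epi_iff_surjective S.g).mp hS.epi_g)
  have hex : Function.Exact (S.f.hom.rTensor (P.complex.X n)) (S.g.hom.rTensor (P.complex.X n)) :=
    Module.Flat.rTensor_exact (P.complex.X n)
      ((ShortComplex.ShortExact.moduleCat_exact_iff_function_exact S).mp hS.exact)
  refine { exact := ?_, mono_f := ?_, epi_g := ?_ }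
  · rw [ShortComplex.ShortExact.moduleCat_exact_iff_function_exact]
    exact hex
  · rw [ModuleCat.mono_iff_injective]
    exact hinj
  · rw [ModuleCat.epi_iff_surjective]
    exact hsurj
end

noncomputable section
open MonoidalCategory HomologicalComplex
variable {R : Type u} [CommRing R] {M : Type u} [AddCommGroup M] [Module R M]
  (P : ProjectiveResolution (ModuleCat.of R M))

lemma fg_of_isZero {X : ModuleCat.{u} R} (h : IsZero X) : Module.Finite R X :=
  fg_of_iso (h.iso (ModuleCat.isZero_of_subsingleton (ModuleCat.of R PUnit))).symm
    (fg_of_subsingleton _ inferInstance)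

lemma fgH_of_iso {X Y : ModuleCat.{u} R} (e : X ≅ Y) (i : ℕ)
    (h : Module.Finite R ((tc P X).homology i)) : Module.Finite R ((tc P Y).homology i) :=
  fg_of_iso ((homologyFunctor _ _ i).mapIso (tcIso P e)) h

lemma fgH_subsingleton (X : ModuleCat.{u} R) (hX : Subsingleton X) (i : ℕ) :
    Module.Finite R ((tc P X).homology i) := by
  have hz : IsZero ((tc P X).X i) := by
    have : Subsingleton (TensorProduct R X (P.complex.X i)) := by
      haveI := hX; infer_instance
    exact @ModuleCat.isZero_of_subsingleton _ _ _ this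
  apply fg_of_isZero
  rw [← HomologicalComplex.exactAt_iff_isZero_homology]
  exact ShortComplex.exact_of_isZero_X₂ _ hz

variable [IsNoetherianRing R]

lemma fg₂ (S : ShortComplex (ModuleCat.{u} R)) (hS : S.ShortExact) (i : ℕ)
    (h1 : Module.Finite R ((tc P S.X₁).homology i))
    (h3 : Module.Finite R ((tc P S.X₃).homology i)) :
    Module.Finite R ((tc P S.X₂).homology i) :=
  fg_of_exact _ ((tcSES P S hS).homology_exact₂ i) h1 h3

lemma fg₃ (S : ShortComplex (ModuleCat.{u} R)) (hS : S.ShortExact) (i : ℕ)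
    (h2 : Module.Finite R ((tc P S.X₂).homology (i + 1)))
    (h1 : Module.Finite R ((tc P S.X₁).homology i)) :
    Module.Finite R ((tc P S.X₃).homology (i + 1)) :=
  fg_of_exact _ ((tcSES P S hS).homology_exact₃ (i + 1) i rfl) h2 h1

lemma fg₃₀ (S : ShortComplex (ModuleCat.{u} R)) (hS : S.ShortExact)
    (h2 : Module.Finite R ((tc P S.X₂).homology 0)) :
    Module.Finite R ((tc P S.X₃).homology 0) := by
  have : Epi ((tcMap P S.g).f 0) := by
    rw [tcMap_f]
    exact (ModuleCat.epi_iff_surjective _).mpr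
      (LinearMap.rTensor_surjective (P.complex.X 0) ((ModuleCat.epi_iff_surjective S.g).mp hS.epi_g))
  have hepi : Epi (homologyMap (tcMap P S.g) 0) :=
    epi_homologyMap_of_epi_of_not_rel _ 0 (by simp [ComplexShape.down])
  exact Module.Finite.of_surjective (homologyMap (tcMap P S.g) 0).hom
    ((ModuleCat.epi_iff_surjective _).mp hepi)
end

noncomputable section
variable {R : Type u} [CommRing R] (a : Ideal R)

/-- the standard SES  0 → Q → (Fin (n+1) → Q) → (Fin n → Q) → 0 -/
def pileSES (Q : Type u) [AddCommGroup Q] [Module R Q] (n : ℕ) :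
    ShortComplex (ModuleCat.{u} R) :=
  ShortComplex.mk
    (ModuleCat.ofHom (LinearMap.single R (fun _ : Fin (n+1) => Q) 0))
    (ModuleCat.ofHom (LinearMap.funLeft R Q Fin.succ))
    (by
      ext x j
      show (Pi.single (M := fun _ : Fin (n+1) => Q) 0 x) j.succ = 0
      exact Pi.single_eq_of_ne (Fin.succ_ne_zero j) x)

lemma pileSES_shortExact (Q : Type u) [AddCommGroup Q] [Module R Q] (n : ℕ) :
    (pileSES (R := R) Q n).ShortExact := by
  refine { exact := ?_, mono_f := ?_, epi_g := ?_ }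
  · rw [ShortComplex.moduleCat_exact_iff_range_eq_ker]
    ext (x : Fin (n+1) → Q)
    constructor
    · rintro ⟨y, rfl⟩
      rw [LinearMap.mem_ker]
      funext j
      show (Pi.single (M := fun _ : Fin (n+1) => Q) 0 y) j.succ = 0
      exact Pi.single_eq_of_ne (Fin.succ_ne_zero j) y
    · intro hx
      refine ⟨x 0, ?_⟩
      have hx' : ∀ j : Fin n, x j.succ = 0 := fun j => congrFun hx j
      show Pi.single 0 (x 0) = x
      funext j
      rcases Fin.eq_zero_or_eq_succ j with rfl | ⟨k, rfl⟩
      · simp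
      · simp [Pi.single_eq_of_ne (Fin.succ_ne_zero k), hx' k]
  · rw [ModuleCat.mono_iff_injective]
    intro x y hxy
    have h' : (Pi.single (M := fun _ : Fin (n+1) => Q) 0 x) = Pi.single 0 y := hxy
    have h0 := congrFun h' 0
    exact (Pi.single_eq_same (M := fun _ : Fin (n+1) => Q) 0 x).symm.trans
      (h0.trans (Pi.single_eq_same (M := fun _ : Fin (n+1) => Q) 0 y))
  · rw [ModuleCat.epi_iff_surjective]
    exact LinearMap.funLeft_surjective_of_injective R Q _ (Fin.succ_injective n)
end

noncomputable section
open MonoidalCategory HomologicalComplex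
variable {R : Type u} [CommRing R] [IsNoetherianRing R] {M : Type u} [AddCommGroup M] [Module R M]
  (P : ProjectiveResolution (ModuleCat.of R M)) (a : Ideal R)

lemma fgH_free (hRa : ∀ i, Module.Finite R ((tc P (ModuleCat.of R (R ⧸ a))).homology i))
    (n : ℕ) (i : ℕ) :
    Module.Finite R ((tc P (ModuleCat.of R (Fin n → R ⧸ a))).homology i) := by
  induction n with
  | zero => exact fgH_subsingleton P _ inferInstance i
  | succ n IH =>
    exact fg₂ P (pileSES (R := R) (R ⧸ a) n) (pileSES_shortExact _ n) i (hRa i) IH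

lemma fgH_killed (hRa : ∀ i, Module.Finite R ((tc P (ModuleCat.of R (R ⧸ a))).homology i))
    (i : ℕ) : ∀ (X : ModuleCat.{u} R), Module.Finite R X →
      a • (⊤ : Submodule R X) = ⊥ → Module.Finite R ((tc P X).homology i) := by
  induction i using Nat.strong_induction_on with
  | _ i IH =>
    intro X hfin hkill
    obtain ⟨n, s, hs⟩ := Module.Finite.exists_fin (R := R) (M := X)
    have hsk : ∀ (x : R), x ∈ a → ∀ (m : X), x • m = 0 := by
      intro x hx m
      have : x • m ∈ a • (⊤ : Submodule R X) :=
        Submodule.smul_mem_smul hx Submodule.mem_top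
      rw [hkill] at this
      exact this
    set cmp : Fin n → ((R ⧸ a) →ₗ[R] X) := fun j =>
      Submodule.liftQ a (LinearMap.toSpanSingleton R X (s j))
        (fun x hx => by simp [LinearMap.toSpanSingleton, hsk x hx (s j)]) with hcmp
    set π : (Fin n → R ⧸ a) →ₗ[R] X := ∑ j, (cmp j).comp (LinearMap.proj j) with hπ
    have hπs : ∀ j, π (Pi.single j 1) = s j := by
      intro j
      rw [hπ]
      rw [LinearMap.sum_apply]
      rw [Finset.sum_eq_single j]
      · simp only [LinearMap.comp_apply, LinearMap.proj_apply]
        rw [Pi.single_eq_same]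
        show (1 : R) • (s j) = s j
        simp
      · intro k _ hk
        simp only [LinearMap.comp_apply, LinearMap.proj_apply]
        rw [Pi.single_eq_of_ne hk]
        simp
      · simp
    have hsurj : Function.Surjective π := by
      rw [← LinearMap.range_eq_top, ← top_le_iff, ← hs, Submodule.span_le]
      rintro _ ⟨j, rfl⟩
      exact ⟨Pi.single j 1, hπs j⟩
    set K := LinearMap.ker π with hK
    have hKfin : Module.Finite R K := by
      have : IsNoetherian R X := inferInstance
      exact Module.Finite.iff_fg.mpr (IsNoetherian.noetherian K)
    have hKkill : a • (⊤ : Submodule R K) = ⊥ := by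
      rw [eq_bot_iff]
      refine Submodule.smul_le.mpr fun r hr k _ => ?_
      rw [Submodule.mem_bot]
      refine Subtype.ext (funext fun j => ?_)
      show r • (k.1 j) = 0
      obtain ⟨x, hx⟩ := Submodule.Quotient.mk_surjective a (k.1 j)
      rw [← hx, ← Submodule.Quotient.mk_smul, Submodule.Quotient.mk_eq_zero, smul_eq_mul]
      exact Ideal.mul_mem_right x a hr
    set S : ShortComplex (ModuleCat.{u} R) := ShortComplex.mk
      (ModuleCat.ofHom (K.subtype)) (ModuleCat.ofHom π)
      (by ext ⟨x, hx⟩; exact hx) with hS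
    have hSE : S.ShortExact := by
      refine { exact := ?_, mono_f := ?_, epi_g := ?_ }
      · rw [ShortComplex.moduleCat_exact_iff_range_eq_ker]
        exact Submodule.range_subtype K
      · rw [ModuleCat.mono_iff_injective]
        exact Subtype.val_injective
      · rw [ModuleCat.epi_iff_surjective]
        exact hsurj
    have h2 : ∀ j, Module.Finite R ((tc P S.X₂).homology j) := fun j =>
      fgH_free P a hRa n j
    -- conclude by cases on i
    match i, IH with
    | 0, _ => exact fg₃₀ P S hSE (h2 0)
    | (j+1), IH =>
      exact fg₃ P S hSE j (h2 (j+1)) (IH j (Nat.lt_succ_self j) (ModuleCat.of R K) hKfin hKkill)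
end

noncomputable section
open MonoidalCategory HomologicalComplex
variable {R : Type u} [CommRing R] [IsNoetherianRing R] {M : Type u} [AddCommGroup M] [Module R M]
  (P : ProjectiveResolution (ModuleCat.of R M)) (a : Ideal R)

lemma fgH_power (hRa : ∀ i, Module.Finite R ((tc P (ModuleCat.of R (R ⧸ a))).homology i))
    (k : ℕ) : ∀ (X : ModuleCat.{u} R), Module.Finite R X →
      a ^ k • (⊤ : Submodule R X) = ⊥ → ∀ i, Module.Finite R ((tc P X).homology i) := by
  induction k with
  | zero =>
    intro X hfin hkill i
    have hsub : Subsingleton X := by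
      rw [pow_zero, Ideal.one_eq_top, Submodule.top_smul] at hkill
      constructor
      intro x y
      have hx : x ∈ (⊥ : Submodule R X) := hkill ▸ Submodule.mem_top
      have hy : y ∈ (⊥ : Submodule R X) := hkill ▸ Submodule.mem_top
      rw [Submodule.mem_bot] at hx hy
      rw [hx, hy]
    exact fgH_subsingleton P X hsub i
  | succ k IHk =>
    intro X hfin hkill i
    set N₀ := a • (⊤ : Submodule R X) with hN₀
    have hN : a ^ k • N₀ = ⊥ := by
      rw [hN₀, ← mul_smul, ← pow_succ]
      exact hkill
    have h1 : ∀ j, Module.Finite R ((tc P (ModuleCat.of R N₀)).homology j) := by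
      have hfin1 : Module.Finite R N₀ := by
        have : IsNoetherian R X := inferInstance
        exact Module.Finite.iff_fg.mpr (IsNoetherian.noetherian N₀)
      refine IHk (ModuleCat.of R N₀) hfin1 ?_
      rw [eq_bot_iff]
      refine Submodule.smul_le.mpr fun r hr (m : ↥N₀) _ => ?_
      rw [Submodule.mem_bot]
      refine Subtype.ext ?_
      show r • (m : ↥X) = 0
      have : r • (m : ↥X) ∈ a ^ k • N₀ := Submodule.smul_mem_smul hr m.2
      rwa [hN, Submodule.mem_bot] at this
    have h3 : ∀ j, Module.Finite R ((tc P (ModuleCat.of R (X ⧸ N₀))).homology j) := by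
      intro j
      refine fgH_killed P a hRa j (ModuleCat.of R (X ⧸ N₀))
        (Module.Finite.of_surjective N₀.mkQ (Submodule.mkQ_surjective N₀)) ?_
      rw [eq_bot_iff]
      refine Submodule.smul_le.mpr fun r hr m _ => ?_
      rw [Submodule.mem_bot]
      obtain ⟨x, rfl⟩ := Submodule.Quotient.mk_surjective N₀ m
      rw [← Submodule.Quotient.mk_smul, Submodule.Quotient.mk_eq_zero]
      exact Submodule.smul_mem_smul hr Submodule.mem_top
    set S : ShortComplex (ModuleCat.{u} R) := ShortComplex.mk
      (ModuleCat.ofHom N₀.subtype) (ModuleCat.ofHom N₀.mkQ)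
      (by ext ⟨x, hx⟩; exact (Submodule.Quotient.mk_eq_zero N₀).mpr hx) with hS
    have hSE : S.ShortExact := by
      refine { exact := ?_, mono_f := ?_, epi_g := ?_ }
      · rw [ShortComplex.moduleCat_exact_iff_range_eq_ker]
        exact (Submodule.range_subtype N₀).trans (Submodule.ker_mkQ N₀).symm
      · rw [ModuleCat.mono_iff_injective]
        exact Subtype.val_injective
      · rw [ModuleCat.epi_iff_surjective]
        exact Submodule.mkQ_surjective N₀
    exact fg₂ P S hSE i (h1 i) (h3 i)
end

/-- If `Tor_i(R/a, M)` is finitely generated for every `i ≥ 0`, then `Tor_i(N, M)` is finitely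
generated for every finitely generated module `N` with `Supp N ⊆ V(a)` and every `i ≥ 0`. -/
theorem tor_finite_of_tor_quotient_finite
    {R : Type u} [CommRing R] [IsNoetherianRing R] (a : Ideal R)
    (M : Type u) [AddCommGroup M] [Module R M]
    (h : ∀ i : ℕ, Module.Finite R
      (((Tor (ModuleCat.{u} R) i).obj (ModuleCat.of R (R ⧸ a))).obj (ModuleCat.of R M)))
    (N : Type u) [AddCommGroup N] [Module R N] [Module.Finite R N]
    (hN : Module.support R N ⊆ PrimeSpectrum.zeroLocus (a : Set R)) (i : ℕ) :
    Module.Finite R (((Tor (ModuleCat.{u} R) i).obj (ModuleCat.of R N)).obj (ModuleCat.of R M)) := by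
  obtain ⟨P⟩ : Nonempty (ProjectiveResolution (ModuleCat.of R M)) := HasProjectiveResolution.out
  have hk : ∃ k : ℕ, a ^ k ≤ Module.annihilator R N := by
    rw [Module.support_eq_zeroLocus] at hN
    exact Ideal.exists_pow_le_of_le_radical_of_fg
      ((PrimeSpectrum.zeroLocus_subset_zeroLocus_iff _ _).mp hN) (IsNoetherian.noetherian a)
  obtain ⟨k, hk⟩ := hk
  have hRa : ∀ j, Module.Finite R ((tc P (ModuleCat.of R (R ⧸ a))).homology j) := fun j =>
    fg_of_iso (torIso P (ModuleCat.of R (R ⧸ a)) j) (h j)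
  have hkill : a ^ k • (⊤ : Submodule R (ModuleCat.of R N)) = ⊥ := by
    rw [eq_bot_iff]
    refine Submodule.smul_le.mpr fun r hr n _ => ?_
    rw [Submodule.mem_bot]
    exact Module.mem_annihilator.mp (hk hr) n
  have := fgH_power P a hRa k (ModuleCat.of R N) ‹Module.Finite R N› hkill i
  exact fg_of_iso (torIso P (ModuleCat.of R N) i).symm this
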